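/- Let d ≥ 1 be an integer and let Ψ₁(u) = ∏_{i=1}^{d} sinc(u_i/4)⁴. Then for every natural number k, every h ∈ ℝ^d and all vectors q₁, …, q_k ∈ ℝ^d, the k-th Fréchet derivative of Ψ₁ at h satisfies |D^k Ψ₁(h)[q₁, …, q_k]| ≤ d^{k/2} · ∏_{l=1}^{k} ‖q_l‖₂. -/

import Mathlib

/-- The cardinal sine function: `sinc z = sin z / z` for `z ≠ 0`, `sinc 0 = 1`. -/
noncomputable def sinc (x : ℝ) : ℝ := if x = 0 then 1 else Real.sin x / x

/-- The sinc-4 kernel (bandwidth one) on `ℝ^d`. -/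
noncomputable def Psi1 (d : ℕ) (u : EuclideanSpace ℝ (Fin d)) : ℝ :=
  ∏ i, sinc (u i / 4) ^ 4



open Real MeasureTheory intervalIntegral
open scoped ContDiff
set_option maxHeartbeats 1000000


/-- Integral representation family: `S m` is the m-th derivative of _root_.sinc. -/
noncomputable def sincD (m : ℕ) (x : ℝ) : ℝ :=
  ∫ t in (0:ℝ)..1, t ^ m * Real.cos (x * t + m * (π / 2))

lemma sincD_zero : sincD 0 = _root_.sinc := by
  funext x
  simp only [sincD, pow_zero, Nat.cast_zero, zero_mul, add_zero, one_mul]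
  by_cases hx : x = 0
  · simp [hx, _root_.sinc]
  · have key : ∀ t ∈ Set.uIcc (0:ℝ) 1, HasDerivAt (fun t => Real.sin (x * t) / x)
        (Real.cos (x * t)) t := by
      intro t _
      have h1 : HasDerivAt (fun t : ℝ => x * t) x t := by
        simpa using (hasDerivAt_id t).const_mul x
      have := (h1.sin).div_const x
      simpa [mul_comm, mul_div_assoc, mul_div_cancel_left₀ _ hx] using this
    rw [intervalIntegral.integral_eq_sub_of_hasDerivAt key
      ((by fun_prop : Continuous fun t : ℝ => Real.cos (x * t)).intervalIntegrable 0 1)]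
    simp [_root_.sinc, hx]

lemma sincD_hasDerivAt (m : ℕ) (x : ℝ) : HasDerivAt (sincD m) (sincD (m+1) x) x := by
  have key := intervalIntegral.hasDerivAt_integral_of_dominated_loc_of_deriv_le
    (F := fun (x : ℝ) (t : ℝ) => t ^ m * Real.cos (x * t + m * (π / 2)))
    (F' := fun (x : ℝ) (t : ℝ) => t ^ (m+1) * Real.cos (x * t + (m+1) * (π / 2)))
    (x₀ := x) (a := 0) (b := 1) (bound := fun _ => 1) (μ := volume) (s := Metric.ball x 1)
    (Metric.ball_mem_nhds x one_pos)
    (by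
      filter_upwards with y
      exact ((by fun_prop : Continuous fun t : ℝ => t ^ m *
        Real.cos (y * t + m * (π / 2))).aestronglyMeasurable.restrict))
    ((by fun_prop : Continuous fun t : ℝ => t ^ m *
      Real.cos (x * t + m * (π / 2))).intervalIntegrable 0 1)
    ((by fun_prop : Continuous fun t : ℝ => t ^ (m+1) *
      Real.cos (x * t + ((m:ℝ)+1) * (π / 2))).aestronglyMeasurable.restrict)
    (by
      filter_upwards with t ht y _
      have ht' : t ∈ Set.Ioc (0:ℝ) 1 := by
        simpa [Set.uIoc_of_le (by norm_num : (0:ℝ) ≤ 1)] using ht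
      have h1 : |t ^ (m+1)| ≤ 1 := by
        rw [abs_pow]
        apply pow_le_one₀ (abs_nonneg t)
        rw [abs_le]; constructor <;> linarith [ht'.1, ht'.2]
      have h2 : |Real.cos (y * t + (m+1) * (π / 2))| ≤ 1 := Real.abs_cos_le_one _
      calc ‖t ^ (m+1) * Real.cos (y * t + (m+1) * (π / 2))‖
          = |t ^ (m+1)| * |Real.cos (y * t + (m+1) * (π / 2))| := by
            rw [Real.norm_eq_abs, abs_mul]
        _ ≤ 1 * 1 := mul_le_mul h1 h2 (abs_nonneg _) zero_le_one
        _ = 1 := by norm_num)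
    ((continuous_const : Continuous fun _ : ℝ => (1:ℝ)).intervalIntegrable 0 1)
    (by
      filter_upwards with t ht y _
      have h1 : HasDerivAt (fun y : ℝ => y * t + m * (π / 2)) t y := by
        simpa using ((hasDerivAt_id y).mul_const t).add_const (m * (π / 2))
      have h2 := (h1.cos).const_mul (t ^ m)
      refine h2.congr_deriv ?_
      push_cast
      rw [show (↑m + 1) * (π / 2) = ↑m * (π/2) + π/2 by ring, show y * t + (↑m * (π / 2) + π / 2)
        = (y * t + ↑m * (π / 2)) + π/2 by ring, Real.cos_add_pi_div_two]
      ring)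
  have h2 := key.2
  simp only [sincD]
  convert h2 using 3 <;> push_cast <;> rfl

lemma abs_sincD_le (m : ℕ) (x : ℝ) : |sincD m x| ≤ 1 := by
  have := intervalIntegral.norm_integral_le_of_norm_le_const
    (C := 1) (f := fun t : ℝ => t ^ m * Real.cos (x * t + m * (π / 2))) (a := 0) (b := 1)
    ?_
  · simpa [sincD] using this
  · intro t ht
    have ht' : t ∈ Set.Ioc (0:ℝ) 1 := by
      simpa [Set.uIoc_of_le (by norm_num : (0:ℝ) ≤ 1)] using ht
    have h1 : |t ^ m| ≤ 1 := by
      rw [abs_pow]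
      apply pow_le_one₀ (abs_nonneg t)
      rw [abs_le]; constructor <;> linarith [ht'.1, ht'.2]
    calc ‖t ^ m * Real.cos (x * t + m * (π / 2))‖
        = |t ^ m| * |Real.cos (x * t + m * (π / 2))| := by rw [Real.norm_eq_abs, abs_mul]
      _ ≤ 1 * 1 := mul_le_mul h1 (Real.abs_cos_le_one _) (abs_nonneg _) zero_le_one
      _ = 1 := by norm_num

lemma deriv_sincD (m : ℕ) : deriv (sincD m) = sincD (m+1) :=
  funext fun x => (sincD_hasDerivAt m x).deriv

lemma contDiff_sincD (m : ℕ) : ContDiff ℝ ∞ (sincD m) := by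
  rw [contDiff_infty]
  intro n
  induction n generalizing m with
  | zero => exact contDiff_zero.2 (continuous_iff_continuousAt.2 fun x => (sincD_hasDerivAt m x).continuousAt)
  | succ n ih =>
    rw [show ((n+1 : ℕ) : WithTop ℕ∞) = (n : ℕ) + 1 by push_cast; rfl, contDiff_succ_iff_deriv]
    refine ⟨fun x => (sincD_hasDerivAt m x).differentiableAt, by simp, ?_⟩
    rw [deriv_sincD]; exact ih (m+1)

lemma contDiff_sinc : ContDiff ℝ ∞ _root_.sinc := sincD_zero ▸ contDiff_sincD 0

lemma iteratedDeriv_sinc (n : ℕ) : iteratedDeriv n _root_.sinc = sincD n := by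
  induction n with
  | zero => simpa [iteratedDeriv_zero] using sincD_zero.symm
  | succ n ih => rw [iteratedDeriv_succ, ih, deriv_sincD]

lemma abs_iteratedDeriv_sinc (n : ℕ) (x : ℝ) : |iteratedDeriv n _root_.sinc x| ≤ 1 := by
  rw [iteratedDeriv_sinc]; exact abs_sincD_le n x


lemma abs_iteratedDeriv_mul_le {f g : ℝ → ℝ} {A B : ℝ} (hA : 0 ≤ A) (hB : 0 ≤ B)
    (hf : ContDiff ℝ ∞ f) (hg : ContDiff ℝ ∞ g)
    (hfb : ∀ n x, |iteratedDeriv n f x| ≤ A ^ n) (hgb : ∀ n x, |iteratedDeriv n g x| ≤ B ^ n)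
    (n : ℕ) (x : ℝ) : |iteratedDeriv n (fun y => f y * g y) x| ≤ (A + B) ^ n := by
  have h1 : ‖iteratedFDeriv ℝ n (fun y => f y * g y) x‖ ≤ ∑ i ∈ Finset.range (n + 1),
      (n.choose i : ℝ) * ‖iteratedFDeriv ℝ i f x‖ * ‖iteratedFDeriv ℝ (n - i) g x‖ :=
    norm_iteratedFDeriv_mul_le hf hg x (by exact_mod_cast (le_top : (n:ℕ∞) ≤ ⊤))
  rw [← Real.norm_eq_abs]
  calc ‖iteratedDeriv n (fun y => f y * g y) x‖
      = ‖iteratedFDeriv ℝ n (fun y => f y * g y) x‖ :=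
        (norm_iteratedFDeriv_eq_norm_iteratedDeriv).symm
    _ ≤ ∑ i ∈ Finset.range (n + 1),
        (n.choose i : ℝ) * ‖iteratedFDeriv ℝ i f x‖ * ‖iteratedFDeriv ℝ (n - i) g x‖ := h1
    _ ≤ ∑ i ∈ Finset.range (n + 1), A ^ i * B ^ (n - i) * (n.choose i : ℝ) := by
        apply Finset.sum_le_sum
        intro i _
        rw [norm_iteratedFDeriv_eq_norm_iteratedDeriv, norm_iteratedFDeriv_eq_norm_iteratedDeriv,
          Real.norm_eq_abs, Real.norm_eq_abs]
        have := mul_le_mul (hfb i x) (hgb (n-i) x) (abs_nonneg _) (pow_nonneg hA i)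
        calc (n.choose i : ℝ) * |iteratedDeriv i f x| * |iteratedDeriv (n-i) g x|
            = (|iteratedDeriv i f x| * |iteratedDeriv (n-i) g x|) * (n.choose i : ℝ) := by ring
          _ ≤ A ^ i * B ^ (n-i) * (n.choose i : ℝ) := by
              apply mul_le_mul_of_nonneg_right this (Nat.cast_nonneg _)
    _ = (A + B) ^ n := (add_pow A B n).symm

noncomputable def sinc4 (x : ℝ) : ℝ := _root_.sinc (x / 4) ^ 4

lemma contDiff_sinc4 : ContDiff ℝ ∞ sinc4 := by
  have : ContDiff ℝ ∞ fun x : ℝ => _root_.sinc (x / 4) :=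
    contDiff_sinc.comp (contDiff_id.div_const 4)
  exact this.pow 4

lemma abs_iteratedDeriv_sinc4 (n : ℕ) (x : ℝ) : |iteratedDeriv n sinc4 x| ≤ 1 := by
  have hsq : ContDiff ℝ ∞ (fun y => _root_.sinc y * _root_.sinc y) := contDiff_sinc.mul contDiff_sinc
  have hsqb : ∀ n x, |iteratedDeriv n (fun y => _root_.sinc y * _root_.sinc y) x| ≤ 2 ^ n := by
    intro n x
    have := abs_iteratedDeriv_mul_le (f := _root_.sinc) (g := _root_.sinc) zero_le_one zero_le_one
      contDiff_sinc contDiff_sinc (by simpa using abs_iteratedDeriv_sinc)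
      (by simpa using abs_iteratedDeriv_sinc) n x
    norm_num at this ⊢
    exact this
  have h4 : ∀ n x, |iteratedDeriv n (fun y => _root_.sinc y ^ 4) x| ≤ 4 ^ n := by
    intro n x
    have := abs_iteratedDeriv_mul_le (A := 2) (B := 2) (by norm_num) (by norm_num)
      hsq hsq hsqb hsqb n x
    norm_num at this
    have heq : (fun y => (_root_.sinc y * _root_.sinc y) * (_root_.sinc y * _root_.sinc y)) = fun y => _root_.sinc y ^ 4 := by
      funext y; ring
    rw [heq] at this
    exact this
  -- now compose with x/4
  have hcomp : (fun x => _root_.sinc (x / 4) ^ 4) = fun x => (fun y => _root_.sinc y ^ 4) ((4:ℝ)⁻¹ * x) := by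
    funext y; rw [div_eq_inv_mul]
  have hg4 : ContDiff ℝ (n : ℕ∞) fun y => _root_.sinc y ^ 4 := ((contDiff_sinc).pow 4).of_le (by exact_mod_cast (le_top : (n:ℕ∞) ≤ ⊤))
  have := iteratedDeriv_comp_const_mul (f := fun y => _root_.sinc y ^ 4) (n := n) hg4 (4:ℝ)⁻¹
  show |iteratedDeriv n (fun x => _root_.sinc (x / 4) ^ 4) x| ≤ 1
  rw [hcomp, this]
  rw [abs_mul, abs_pow]
  calc |(4:ℝ)⁻¹| ^ n * |iteratedDeriv n (fun y => _root_.sinc y ^ 4) ((4:ℝ)⁻¹ * x)|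
      ≤ |(4:ℝ)⁻¹| ^ n * 4 ^ n := by
        apply mul_le_mul_of_nonneg_left (h4 n _) (pow_nonneg (abs_nonneg _) n)
    _ = 1 := by rw [abs_of_nonneg (by norm_num : (0:ℝ) ≤ (4:ℝ)⁻¹), ← mul_pow]; norm_num

lemma contDiff_prodCoord {d : ℕ} (φ : Fin d → ℝ → ℝ) (hφ : ∀ i, ContDiff ℝ ∞ (φ i)) :
    ContDiff ℝ ∞ (fun u : EuclideanSpace ℝ (Fin d) => ∏ i, φ i (u i)) :=
  contDiff_prod fun i _ => (hφ i).comp ((EuclideanSpace.proj (𝕜 := ℝ) i).contDiff : ContDiff ℝ ∞ (fun u : EuclideanSpace ℝ (Fin d) => u i))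

lemma fderiv_prodCoord {d : ℕ} (φ : Fin d → ℝ → ℝ) (hφ : ∀ i, ContDiff ℝ ∞ (φ i))
    (y v : EuclideanSpace ℝ (Fin d)) :
    fderiv ℝ (fun u : EuclideanSpace ℝ (Fin d) => ∏ i, φ i (u i)) y v
      = ∑ i, v i * ∏ j, Function.update φ i (deriv (φ i)) j (y j) := by
  have hder : ∀ i : Fin d, HasFDerivAt (fun u : EuclideanSpace ℝ (Fin d) => φ i (u i))
      ((deriv (φ i) (y i)) • (EuclideanSpace.proj i :
        EuclideanSpace ℝ (Fin d) →L[ℝ] ℝ)) y := by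
    intro i
    have h1 : HasDerivAt (φ i) (deriv (φ i) (y i)) (y i) :=
      (((hφ i).differentiable (by simp)) (y i)).hasDerivAt
    have hproj : HasFDerivAt (fun u : EuclideanSpace ℝ (Fin d) => u i)
        (EuclideanSpace.proj i : EuclideanSpace ℝ (Fin d) →L[ℝ] ℝ) y :=
      (EuclideanSpace.proj i : EuclideanSpace ℝ (Fin d) →L[ℝ] ℝ).hasFDerivAt
    exact h1.comp_hasFDerivAt y hproj
  have hfd := HasFDerivAt.finset_prod (u := Finset.univ)
    (g := fun i (u : EuclideanSpace ℝ (Fin d)) => φ i (u i)) (fun i _ => hder i)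
  rw [hfd.fderiv]
  simp only [ContinuousLinearMap.sum_apply, ContinuousLinearMap.smul_apply, smul_eq_mul]
  apply Finset.sum_congr rfl
  intro i _
  have hprod : ∏ j, Function.update φ i (deriv (φ i)) j (y j)
      = deriv (φ i) (y i) * ∏ j ∈ Finset.univ.erase i, φ j (y j) := by
    rw [← Finset.mul_prod_erase Finset.univ _ (Finset.mem_univ i), Function.update_self]
    congr 1
    apply Finset.prod_congr rfl
    intro j hj
    rw [Function.update_of_ne (Finset.mem_erase.1 hj).1]
  rw [hprod]
  have : (EuclideanSpace.proj i : EuclideanSpace ℝ (Fin d) →L[ℝ] ℝ) v = v i := rfl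
  rw [this]
  ring

lemma multi_bound : ∀ (k d : ℕ) (φ : Fin d → ℝ → ℝ), (∀ i, ContDiff ℝ ∞ (φ i)) →
    (∀ i n x, |iteratedDeriv n (φ i) x| ≤ 1) →
    ∀ (h : EuclideanSpace ℝ (Fin d)) (q : Fin k → EuclideanSpace ℝ (Fin d)),
    |iteratedFDeriv ℝ k (fun u => ∏ i, φ i (u i)) h q| ≤ ∏ l, ∑ i, |q l i| := by
  intro k
  induction k with
  | zero =>
    intro d φ hφ hb h q
    rw [iteratedFDeriv_zero_apply]
    simp only [Finset.univ_eq_empty, Finset.prod_empty]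
    rw [Finset.abs_prod]
    apply Finset.prod_le_one (fun i _ => abs_nonneg _)
    intro i _
    simpa [iteratedDeriv_zero] using hb i 0 (h i)
  | succ k ih =>
    intro d φ hφ hb h q
    set F : EuclideanSpace ℝ (Fin d) → ℝ := fun u => ∏ i, φ i (u i) with hF
    set v := q (Fin.last k) with hv
    have hFsmooth : ContDiff ℝ ∞ F := contDiff_prodCoord φ hφ
    have hF' : ContDiff ℝ (k : WithTop ℕ∞) (fderiv ℝ F) := by
      apply hFsmooth.fderiv_right
      exact_mod_cast (le_top : ((k:ℕ∞) + 1 : ℕ∞) ≤ ⊤)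
    -- functions after one directional derivative
    set ψ : Fin d → Fin d → ℝ → ℝ := fun i => Function.update φ i (deriv (φ i)) with hψ
    have hψsmooth : ∀ i j, ContDiff ℝ ∞ (ψ i j) := by
      intro i j
      rcases eq_or_ne j i with rfl | hne
      · rw [hψ]; simp only [Function.update_self]
        exact (contDiff_infty_iff_deriv.mp (hφ j)).2
      · rw [hψ]; simp only [Function.update_of_ne hne]; exact hφ j
    have hψb : ∀ i j n x, |iteratedDeriv n (ψ i j) x| ≤ 1 := by
      intro i j n x
      rcases eq_or_ne j i with rfl | hne
      · rw [hψ]; simp only [Function.update_self]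
        rw [← iteratedDeriv_succ']
        exact hb j (n+1) x
      · rw [hψ]; simp only [Function.update_of_ne hne]; exact hb j n x
    set G : Fin d → EuclideanSpace ℝ (Fin d) → ℝ := fun i u => ∏ j, ψ i j (u j) with hG
    have hGsmooth : ∀ i, ContDiff ℝ ∞ (G i) := fun i => contDiff_prodCoord _ (hψsmooth i)
    -- step 1 : peel off the last derivative
    have e1 : iteratedFDeriv ℝ (k+1) F h q
        = iteratedFDeriv ℝ k (fun y => fderiv ℝ F y v) h (Fin.init q) := by
      rw [iteratedFDeriv_succ_apply_right]
      rw [show (fun y => fderiv ℝ F y v)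
          = (ContinuousLinearMap.apply ℝ ℝ v) ∘ (fderiv ℝ F) from rfl]
      rw [ContinuousLinearMap.iteratedFDeriv_comp_left _ hF'.contDiffAt le_rfl]
      rfl
    -- step 2 : express the directional derivative as a sum
    have e2 : (fun y => fderiv ℝ F y v) = fun y => ∑ i, (v i • G i) y := by
      funext y
      rw [fderiv_prodCoord φ hφ y v]
      simp [hG, hψ, smul_eq_mul]
    have hsummand : ∀ i : Fin d, ContDiff ℝ (k : WithTop ℕ∞) (v i • G i) :=
      fun i => ((hGsmooth i).const_smul (v i)).of_le
        (by exact_mod_cast (le_top : (k:ℕ∞) ≤ ⊤))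
    have e3 : iteratedFDeriv ℝ k (fun y => fderiv ℝ F y v) h (Fin.init q)
        = ∑ i, v i • iteratedFDeriv ℝ k (G i) h (Fin.init q) := by
      rw [e2]
      have : (fun y => ∑ i, (v i • G i) y) = (∑ i : Fin d, (v i • G i) ·) := by
        funext y; simp
      rw [this, iteratedFDeriv_sum (fun i _ => hsummand i)]
      simp only [Finset.sum_apply, ContinuousMultilinearMap.sum_apply]
      apply Finset.sum_congr rfl
      intro i _
      rw [iteratedFDeriv_const_smul_apply
        (((hGsmooth i).of_le (by exact_mod_cast (le_top : (k:ℕ∞) ≤ ⊤) : ((k:ℕ) : WithTop ℕ∞) ≤ ∞)).contDiffAt)]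
      rfl
    rw [e1, e3]
    -- step 3 : bound the sum
    calc |∑ i, v i • iteratedFDeriv ℝ k (G i) h (Fin.init q)|
        ≤ ∑ i, |v i| * |iteratedFDeriv ℝ k (G i) h (Fin.init q)| := by
          refine (Finset.abs_sum_le_sum_abs _ _).trans ?_
          apply Finset.sum_le_sum
          intro i _
          rw [smul_eq_mul, abs_mul]
      _ ≤ ∑ i, |v i| * ∏ l : Fin k, ∑ j, |(Fin.init q) l j| := by
          apply Finset.sum_le_sum
          intro i _
          exact mul_le_mul_of_nonneg_left (ih d (ψ i) (hψsmooth i) (hψb i) h (Fin.init q))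
            (abs_nonneg _)
      _ = (∑ i, |v i|) * ∏ l : Fin k, ∑ j, |(Fin.init q) l j| := by
          rw [← Finset.sum_mul]
      _ = ∏ l : Fin (k+1), ∑ i, |q l i| := by
          rw [Fin.prod_univ_castSucc]
          have : ∀ l : Fin k, (Fin.init q) l = q (Fin.castSucc l) := fun l => rfl
          simp only [this]
          ring

lemma sum_abs_le_sqrt_card {d : ℕ} (a : EuclideanSpace ℝ (Fin d)) :
    ∑ i, |a i| ≤ Real.sqrt d * ‖a‖ := by
  have h1 : (∑ i, |a i|) ^ 2 ≤ (d : ℝ) * ∑ i, a i ^ 2 := by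
    have := sq_sum_le_card_mul_sum_sq (s := Finset.univ) (f := fun i : Fin d => |a i|)
    simpa [sq_abs] using this
  have hnorm : ‖a‖ = Real.sqrt (∑ i, a i ^ 2) := by
    rw [EuclideanSpace.norm_eq]
    congr 1
    apply Finset.sum_congr rfl
    intro i _
    rw [Real.norm_eq_abs, sq_abs]
  have h2 : ∑ i, |a i| = Real.sqrt ((∑ i, |a i|) ^ 2) :=
    (Real.sqrt_sq (Finset.sum_nonneg fun i _ => abs_nonneg _)).symm
  rw [h2, hnorm, ← Real.sqrt_mul (Nat.cast_nonneg d)]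
  exact Real.sqrt_le_sqrt h1

theorem stmt_18 (d : ℕ) (hd : 1 ≤ d) (k : ℕ) (h : EuclideanSpace ℝ (Fin d))
    (q : Fin k → EuclideanSpace ℝ (Fin d)) :
    |iteratedFDeriv ℝ k (Psi1 d) h q| ≤ Real.sqrt d ^ k * ∏ l, ‖q l‖ := by
  have hPsi : Psi1 d = fun u : EuclideanSpace ℝ (Fin d) =>
      ∏ i, sinc4 (u i) := rfl
  have hmain := multi_bound k d (fun _ => fun x : ℝ => _root_.sinc (x / 4) ^ 4)
    (fun _ => contDiff_sinc4) (fun _ => abs_iteratedDeriv_sinc4) h q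
  rw [hPsi]
  refine hmain.trans ?_
  calc ∏ l, ∑ i, |q l i|
      ≤ ∏ l, (Real.sqrt d * ‖q l‖) := by
        apply Finset.prod_le_prod
        · intro l _; exact Finset.sum_nonneg fun i _ => abs_nonneg _
        · intro l _; exact sum_abs_le_sqrt_card (q l)
    _ = Real.sqrt d ^ k * ∏ l, ‖q l‖ := by
        rw [Finset.prod_mul_distrib, Finset.prod_const, Finset.card_univ, Fintype.card_fin]
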